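/- arXiv:2110.09494 — 3 statements merged into one kernel-verified Lean document; each statement's English description precedes it below -/
import Mathlib

section
/- Let M be a compact metric space, K ⊆ M a closed subset, and f : M → ℝ a continuous function. Then there exists a sequence of continuous functions F_n : M → ℝ (n ∈ ℕ) such that: (i) F_n(x) < F_{n+1}(x) for every x ∈ M and every n; (ii) F_n(x) < f(x) for every x ∈ K and every n; and (iii) for every continuous function H : M → ℝ with H(x) < f(x) for all x ∈ K, there exists n such that H(x) < F_n(x) for all x ∈ M. (In other words, the set of continuous functions strictly below f on K, ordered pointwise, admits a countable strictly increasing cofinal sequence.) -/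
/-- For a compact metric space `M`, a closed subset `K ⊆ M` and a continuous
`f : M → ℝ`, the set of continuous functions strictly below `f` on `K` (ordered pointwise)
admits a countable strictly increasing cofinal sequence `F_n`. -/
theorem stmt2 {M : Type*} [MetricSpace M] [CompactSpace M]
    (K : Set M) (hK : IsClosed K) (f : M → ℝ) (hf : Continuous f) :
    ∃ F : ℕ → M → ℝ,
      (∀ n, Continuous (F n)) ∧
      (∀ n x, F n x < F (n + 1) x) ∧
      (∀ n, ∀ x ∈ K, F n x < f x) ∧
      (∀ H : M → ℝ, Continuous H → (∀ x ∈ K, H x < f x) →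
        ∃ n, ∀ x, H x < F n x) := by
  rcases K.eq_empty_or_nonempty with hKe | hKne
  · -- K empty: F n = n works
    subst hKe
    refine ⟨fun n _ => n, fun n => continuous_const, ?_, by simp, ?_⟩
    · intro n x
      show (n : ℝ) < ((n + 1 : ℕ) : ℝ)
      exact_mod_cast Nat.lt_succ_self n
    · intro H hH _
      rcases isEmpty_or_nonempty M with hM | hM
      · exact ⟨0, fun x => (IsEmpty.false x).elim⟩
      obtain ⟨x0, -, hx0⟩ := isCompact_univ.exists_isMaxOn Set.univ_nonempty
        hH.continuousOn
      obtain ⟨n, hn⟩ := exists_nat_gt (H x0)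
      exact ⟨n, fun x => lt_of_le_of_lt (isMaxOn_iff.mp hx0 x (Set.mem_univ x)) hn⟩
  · -- K nonempty
    have hM : Nonempty M := ⟨hKne.some⟩
    set d : M → ℝ := fun x => Metric.infDist x K with hd
    have hdcont : Continuous d := Metric.continuous_infDist_pt K
    have hdnonneg : ∀ x, 0 ≤ d x := fun x => Metric.infDist_nonneg
    have hdK : ∀ x ∈ K, d x = 0 := fun x hx => Metric.infDist_zero_of_mem hx
    clear_value d
    refine ⟨fun n x => f x - 1 / (n + 1) + n * d x, ?_, ?_, ?_, ?_⟩
    · intro n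
      exact ((hf.sub continuous_const).add (continuous_const.mul hdcont))
    · intro n x
      have h1 : (1 : ℝ) / (n + 1 + 1) < 1 / (n + 1) :=
        one_div_lt_one_div_of_lt (by positivity) (by linarith)
      have h2 : (n : ℝ) * d x ≤ ((n : ℝ) + 1) * d x := by
        nlinarith [hdnonneg x]
      show f x - 1 / ((n : ℝ) + 1) + (n : ℝ) * d x
        < f x - 1 / (((n + 1 : ℕ) : ℝ) + 1) + ((n + 1 : ℕ) : ℝ) * d x
      push_cast
      nlinarith
    · intro n x hx
      show f x - 1 / ((n : ℝ) + 1) + (n : ℝ) * d x < f x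
      rw [hdK x hx]
      have : (0 : ℝ) < 1 / (n + 1) := by positivity
      nlinarith
    · intro H hH hHf
      set φ : M → ℝ := fun x => H x - f x with hφ
      have hφc : Continuous φ := hH.sub hf
      have hφd : ∀ x, φ x = H x - f x := fun x => rfl
      clear_value φ
      -- max of φ on K is negative
      obtain ⟨x0, hx0K, hx0'⟩ := (hK.isCompact).exists_isMaxOn hKne hφc.continuousOn
      have hx0 : ∀ x ∈ K, φ x ≤ φ x0 := isMaxOn_iff.mp hx0'
      set ε : ℝ := -φ x0 with hε
      have hεpos : 0 < ε := by
        have := hHf x0 hx0K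
        rw [hε]
        have := hφd x0
        linarith
      clear_value ε
      -- global bound for φ
      obtain ⟨x1, -, hx1⟩ := isCompact_univ.exists_isMaxOn Set.univ_nonempty
        hφc.continuousOn
      set C : ℝ := φ x1 with hC
      have hCb : ∀ x, φ x ≤ C := fun x => isMaxOn_iff.mp hx1 x (Set.mem_univ x)
      clear_value C
      -- the open set U = {φ < -ε/2}
      set U : Set M := {x | φ x < -ε / 2} with hU
      have hKU : K ⊆ U := by
        intro x hx
        have h := hx0 x hx
        simp only [hU, Set.mem_setOf_eq]
        have : ε = -φ x0 := hε
        linarith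
      -- positive lower bound for d on Uᶜ
      have hr : ∃ r : ℝ, 0 < r ∧ ∀ x ∉ U, r ≤ d x := by
        rcases Set.eq_empty_or_nonempty Uᶜ with hUc | hUc
        · refine ⟨1, one_pos, fun x hx => ?_⟩
          exact absurd (hUc ▸ (hx : x ∈ Uᶜ)) (Set.notMem_empty x)
        · have hUccl : IsClosed Uᶜ := (isOpen_lt hφc continuous_const).isClosed_compl
          obtain ⟨x2, hx2, hx2min⟩ := hUccl.isCompact.exists_isMinOn hUc
            hdcont.continuousOn
          refine ⟨d x2, ?_, fun x hx => isMinOn_iff.mp hx2min x hx⟩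
          have hx2K : x2 ∉ K := fun h => hx2 (hKU h)
          simpa [hd] using (hK.notMem_iff_infDist_pos hKne).mp hx2K
      obtain ⟨r, hrpos, hrle⟩ := hr
      clear_value U
      -- choose n large
      obtain ⟨n, hn⟩ := exists_nat_gt (max (2 / ε) ((C + 2) / r))
      have hn1 : (2 / ε) < n := lt_of_le_of_lt (le_max_left _ _) hn
      have hn2 : ((C + 2) / r) < n := lt_of_le_of_lt (le_max_right _ _) hn
      refine ⟨n, fun x => ?_⟩
      have key : φ x < -(1 / (n + 1)) + n * d x := by
        by_cases hx : x ∈ U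
        · have h1 : φ x < -ε / 2 := by rw [hU] at hx; exact hx
          have h2 : (1 : ℝ) / (n + 1) < ε / 2 := by
            rw [div_lt_div_iff₀ (by positivity) (by norm_num)]
            have : 2 / ε < (n : ℝ) + 1 := by linarith
            rw [div_lt_iff₀ hεpos] at this
            linarith
          have h3 : (0 : ℝ) ≤ (n : ℝ) * d x := mul_nonneg (Nat.cast_nonneg n) (hdnonneg x)
          linarith
        · have h1 : φ x ≤ C := hCb x
          have h2 : r ≤ d x := hrle x hx
          have h3 : C + 2 < (n : ℝ) * r := by
            rw [div_lt_iff₀ hrpos] at hn2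
            linarith
          have h4 : (n : ℝ) * r ≤ n * d x := by
            apply mul_le_mul_of_nonneg_left h2 (Nat.cast_nonneg n)
          have h5 : (1 : ℝ) / (n + 1) ≤ 1 := by
            rw [div_le_one (by positivity)]; linarith [Nat.cast_nonneg (α := ℝ) n]
          linarith
      rw [hφd x] at key
      linarith
end

section
/- Let f : Y → X be a continuous surjective proper map of metric spaces. Let U ⊆ Y be an open subset and suppose D ⊆ U satisfies f⁻¹(f(D)) = D. If the image f(U \ D) is open in X, then the image f(U) is open in X. -/
/-- Let `f : Y → X` be a continuous surjective proper map of metric spaces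
(proper: preimage of every compact set is compact).  Let `U ⊆ Y` be open and `D ⊆ U` with
`f⁻¹(f(D)) = D`.  If `f(U \ D)` is open then `f(U)` is open. -/
theorem stmt5 {Y X : Type*} [MetricSpace Y] [MetricSpace X]
    (f : Y → X) (hf : Continuous f) (hsurj : Function.Surjective f)
    (hproper : ∀ K : Set X, IsCompact K → IsCompact (f ⁻¹' K))
    (U D : Set Y) (hU : IsOpen U) (hDU : D ⊆ U)
    (hsat : f ⁻¹' (f '' D) = D)
    (hopen : IsOpen (f '' (U \ D))) :
    IsOpen (f '' U) := by
  have hclosed : IsClosedMap f :=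
    (isProperMap_iff_isCompact_preimage.2 ⟨hf, fun K hK => hproper K hK⟩).isClosedMap
  rw [isOpen_iff_mem_nhds]
  rintro x ⟨y, hyU, rfl⟩
  by_cases hyD : y ∈ D
  · -- fiber over f y is contained in U
    have hfiber : f ⁻¹' {f y} ⊆ U := by
      intro z hz
      have : z ∈ f ⁻¹' (f '' D) := ⟨y, hyD, (Set.mem_preimage.1 hz).symm⟩
      exact hDU (hsat ▸ this)
    set V : Set X := (f '' Uᶜ)ᶜ with hV
    have hVopen : IsOpen V := (hclosed _ hU.isClosed_compl).isOpen_compl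
    have hxV : f y ∈ V := by
      rintro ⟨z, hz, hzf⟩
      exact hz (hfiber hzf)
    have hVU : V ⊆ f '' U := by
      intro v hv
      obtain ⟨w, rfl⟩ := hsurj v
      refine ⟨w, ?_, rfl⟩
      by_contra hw
      exact hv ⟨w, hw, rfl⟩
    exact Filter.mem_of_superset (hVopen.mem_nhds hxV) hVU
  · exact Filter.mem_of_superset (hopen.mem_nhds ⟨y, ⟨hyU, hyD⟩, rfl⟩)
      (Set.image_mono Set.diff_subset)
end

section
/- Let a > 0 and let s₀ ≤ s₁ be real numbers. Let g : ℝ → ℝ be differentiable on [s₀, s₁] with g(s₀) < 0, and suppose that g′(s) ≥ a · (g(s))² for all s ∈ [s₀, s₁]. Then for every s ∈ (s₀, s₁], one has g(s) ≥ −1/(a·(s − s₀)). In particular, if g = log ∘ u for a positive function u, then u(s) ≥ exp(−1/(a·(s − s₀))) for all s ∈ (s₀, s₁]. -/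
/-- Let `a > 0`, `s₀ ≤ s₁`, and let `g` be differentiable on `[s₀, s₁]`
(with derivative `g'` within `[s₀, s₁]`), with `g(s₀) < 0` and `g′(s) ≥ a·g(s)²` on `[s₀, s₁]`.
Then `g(s) ≥ −1/(a·(s − s₀))` for every `s ∈ (s₀, s₁]`; in particular, if `g = log ∘ u` for a
positive function `u`, then `u(s) ≥ exp(−1/(a·(s − s₀)))` for all `s ∈ (s₀, s₁]`. -/
theorem stmt10 (a s₀ s₁ : ℝ) (ha : 0 < a) (hs : s₀ ≤ s₁)
    (g g' : ℝ → ℝ)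
    (hderiv : ∀ s ∈ Set.Icc s₀ s₁, HasDerivWithinAt g (g' s) (Set.Icc s₀ s₁) s)
    (hg0 : g s₀ < 0)
    (hineq : ∀ s ∈ Set.Icc s₀ s₁, a * g s ^ 2 ≤ g' s) :
    (∀ s ∈ Set.Ioc s₀ s₁, -(1 / (a * (s - s₀))) ≤ g s) ∧
      (∀ u : ℝ → ℝ, (∀ s, 0 < u s) → g = Real.log ∘ u →
        ∀ s ∈ Set.Ioc s₀ s₁, Real.exp (-(1 / (a * (s - s₀)))) ≤ u s) := by
  have gcont : ContinuousOn g (Set.Icc s₀ s₁) := fun t ht =>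
    (hderiv t ht).continuousWithinAt
  have main : ∀ s ∈ Set.Ioc s₀ s₁, -(1 / (a * (s - s₀))) ≤ g s := by
    intro s hsmem
    obtain ⟨hs0, hs1⟩ := hsmem
    have hsub : s - s₀ > 0 := by linarith
    have hapos : 0 < a * (s - s₀) := mul_pos ha hsub
    rcases le_or_gt 0 (g s) with hpos | hneg
    · have : -(1 / (a * (s - s₀))) ≤ 0 := by rw [neg_nonpos]; positivity
      linarith
    · -- g is monotone on [s₀, s₁]
      have hmono : MonotoneOn g (Set.Icc s₀ s₁) := by
        apply monotoneOn_of_hasDerivWithinAt_nonneg (convex_Icc s₀ s₁) gcont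
          (f' := g')
        · intro x hx
          exact (hderiv x (interior_subset hx)).mono interior_subset
        · intro x hx
          have := hineq x (interior_subset hx)
          nlinarith [sq_nonneg (g x)]
      -- on [s₀, s], g ≤ g s < 0
      have hIccsub : Set.Icc s₀ s ⊆ Set.Icc s₀ s₁ :=
        Set.Icc_subset_Icc le_rfl hs1
      have hgneg : ∀ t ∈ Set.Icc s₀ s, g t < 0 := by
        intro t ht
        have : g t ≤ g s := hmono (hIccsub ht) ⟨le_of_lt hs0, hs1⟩ ht.2
        linarith
      -- h t = -(g t)⁻¹ - a * t  is monotone on [s₀, s]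
      set h : ℝ → ℝ := fun t => -(g t)⁻¹ - a * t with hh
      have hmonoh : MonotoneOn h (Set.Icc s₀ s) := by
        apply monotoneOn_of_hasDerivWithinAt_nonneg (convex_Icc s₀ s)
          (f' := fun t => g' t / (g t) ^ 2 - a)
        · apply ContinuousOn.sub
          · exact ((gcont.mono hIccsub).inv₀ (fun t ht => (hgneg t ht).ne)).neg
          · exact (continuous_const.mul continuous_id).continuousOn
        · intro x hx
          have hxmem : x ∈ Set.Icc s₀ s := interior_subset hx
          have hne : g x ≠ 0 := (hgneg x hxmem).ne
          have h1 : HasDerivWithinAt g (g' x) (interior (Set.Icc s₀ s)) x :=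
            (hderiv x (hIccsub hxmem)).mono
              ((interior_subset : interior (Set.Icc s₀ s) ⊆ _).trans hIccsub)
          have h2 := (h1.inv hne).neg
          have h3 : HasDerivWithinAt (fun t => a * t) a (interior (Set.Icc s₀ s)) x :=
            by simpa using ((hasDerivAt_id x).const_mul a).hasDerivWithinAt
          have h4 := h2.sub h3
          refine h4.congr_deriv ?_
          field_simp
        · intro x hx
          have hxmem : x ∈ Set.Icc s₀ s := interior_subset hx
          have hsq : (0:ℝ) < (g x) ^ 2 := pow_two_pos_of_ne_zero (hgneg x hxmem).ne
          have := hineq x (hIccsub hxmem)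
          rw [sub_nonneg, le_div_iff₀ hsq]
          linarith
      have key : h s₀ ≤ h s :=
        hmonoh ⟨le_rfl, le_of_lt hs0⟩ ⟨le_of_lt hs0, le_rfl⟩ (le_of_lt hs0)
      have hg0inv : 0 < -(g s₀)⁻¹ := by
        rw [neg_pos]
        exact inv_neg''.mpr hg0
      have key2 : a * (s - s₀) ≤ (-(g s))⁻¹ := by
        simp only [hh] at key
        rw [inv_neg]
        nlinarith
      have hgsneg : 0 < -(g s) := by linarith
      have : -(g s) ≤ (a * (s - s₀))⁻¹ := by
        have := inv_anti₀ hapos key2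
        rwa [inv_inv] at this
      rw [one_div]
      linarith
  refine ⟨main, ?_⟩
  intro u hu hgu s hsmem
  have h1 := main s hsmem
  rw [hgu] at h1
  have : Real.exp (-(1 / (a * (s - s₀)))) ≤ Real.exp (Real.log (u s)) :=
    Real.exp_le_exp.mpr h1
  rwa [Real.exp_log (hu s)] at this
end
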